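/- Let $T$ be a finite set partitioned by a true clustering $T^*$ and let $\tilde{T}$ be another clustering of $T$ (both viewed as clustering functions). Suppose some true cluster $T_1^* \subseteq T$ has $|T_1^*| > s_t$, and suppose every cluster of $\tilde{T}$ has size at most $s_t/2$ (so in particular intersects $T_1^*$ in at most $s_t/2$ points). Then $d(\tilde{T}, T^*) > s_t^2/8$, where $d$ counts the number of unordered pairs on which the two clustering functions disagree. -/

import Mathlib

open Finset

/-- Number of unordered pairs (u<v) on which two clusterings (given by label
functions `f`, `g`) disagree. -/
def disag (n : ℕ) (f g : Fin n → ℕ) : ℕ :=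
  (Finset.univ.filter (fun e : Fin n × Fin n =>
    e.1 < e.2 ∧ ¬((f e.1 = f e.2) ↔ (g e.1 = g e.2)))).card

/-- if some true cluster has size `> s_t` and every cluster of the
other clustering has size `≤ s_t/2`, then the two clusterings disagree on more
than `s_t²/8` unordered pairs. -/
theorem stmt3 (n : ℕ) (st : ℝ) (tstar ttil : Fin n → ℕ) (a : ℕ)
    (hbig : st < ((Finset.univ.filter (fun v => tstar v = a)).card : ℝ))
    (hsmall : ∀ b : ℕ, ((Finset.univ.filter (fun v => ttil v = b)).card : ℝ) ≤ st / 2) :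
    st ^ 2 / 8 < (disag n ttil tstar : ℝ) := by
  classical
  set C : Finset (Fin n) := Finset.univ.filter (fun v => tstar v = a) with hCdef
  have hst0 : 0 ≤ st := by
    have h := hsmall 0
    have h0 : (0:ℝ) ≤ ((Finset.univ.filter (fun v => ttil v = 0)).card : ℝ) :=
      Nat.cast_nonneg _
    linarith
  have hCpos : 0 < C.card := by
    have : (0:ℝ) < (C.card : ℝ) := lt_of_le_of_lt hst0 hbig
    exact_mod_cast this
  obtain ⟨v0, hv0⟩ := Finset.card_pos.mp hCpos
  have hst2 : 2 ≤ st := by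
    have h1 := hsmall (ttil v0)
    have hmem : v0 ∈ Finset.univ.filter (fun v => ttil v = ttil v0) := by simp
    have : (1:ℝ) ≤ ((Finset.univ.filter (fun v => ttil v = ttil v0)).card : ℝ) := by
      exact_mod_cast Finset.card_pos.mpr ⟨v0, hmem⟩
    linarith
  -- ordered pairs
  set S : Finset (Fin n × Fin n) := Finset.univ.filter
    (fun e => tstar e.1 = a ∧ tstar e.2 = a ∧ ttil e.1 ≠ ttil e.2) with hSdef
  set D : Finset (Fin n × Fin n) := Finset.univ.filter
    (fun e => e.1 < e.2 ∧ tstar e.1 = a ∧ tstar e.2 = a ∧ ttil e.1 ≠ ttil e.2) with hDdef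
  set D' : Finset (Fin n × Fin n) := Finset.univ.filter
    (fun e => e.2 < e.1 ∧ tstar e.1 = a ∧ tstar e.2 = a ∧ ttil e.1 ≠ ttil e.2) with hD'def
  -- Step A: fiberwise count of S
  have hfib : S.card = ∑ u ∈ C, (S.filter (fun e => e.1 = u)).card := by
    apply Finset.card_eq_sum_card_fiberwise
    intro e he
    simp only [hSdef, Finset.mem_coe, Finset.mem_filter, Finset.mem_univ, true_and] at he
    simp [hCdef, he.1]
  have hfibcard : ∀ u ∈ C, (S.filter (fun e => e.1 = u)).card
      = (C.filter (fun v => ttil v ≠ ttil u)).card := by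
    intro u hu
    have hua : tstar u = a := by
      simp only [hCdef, Finset.mem_filter, Finset.mem_univ, true_and] at hu; exact hu
    apply Finset.card_bij (fun e _ => e.2)
    · intro e he
      simp only [hSdef, Finset.mem_filter, Finset.mem_univ, true_and] at he
      obtain ⟨⟨h1, h2, h3⟩, h4⟩ := he
      simp only [hCdef, Finset.mem_filter, Finset.mem_univ, true_and]
      subst h4
      exact ⟨h2, fun h => h3 h.symm⟩
    · intro e1 he1 e2 he2 h
      simp only [hSdef, Finset.mem_filter] at he1 he2
      exact Prod.ext (he1.2.trans he2.2.symm) h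
    · intro v hv
      simp only [hCdef, Finset.mem_filter, Finset.mem_univ, true_and] at hv
      refine ⟨(u, v), ?_, rfl⟩
      simp only [hSdef, Finset.mem_filter, Finset.mem_univ, true_and]
      exact ⟨⟨hua, hv.1, fun h => hv.2 h.symm⟩, trivial⟩
  -- lower bound for each fiber
  have key : ∀ u ∈ C, (C.card : ℝ) - st/2 ≤ ((C.filter (fun v => ttil v ≠ ttil u)).card : ℝ) := by
    intro u hu
    have hadd := Finset.card_filter_add_card_filter_not
      (s := C) (p := fun v => ttil v = ttil u)
    have hsub : (C.filter (fun v => ttil v = ttil u))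
        ⊆ Finset.univ.filter (fun v => ttil v = ttil u) := by
      intro x hx
      simp only [hCdef, Finset.mem_filter, Finset.mem_univ, true_and] at hx ⊢
      exact hx.2
    have hle : ((C.filter (fun v => ttil v = ttil u)).card : ℝ)
        ≤ ((Finset.univ.filter (fun v => ttil v = ttil u)).card : ℝ) := by
      exact_mod_cast Finset.card_le_card hsub
    have h2 := hsmall (ttil u)
    have haddR : ((C.filter (fun v => ttil v = ttil u)).card : ℝ)
        + ((C.filter (fun v => ¬ ttil v = ttil u)).card : ℝ) = (C.card : ℝ) := by
      exact_mod_cast hadd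
    have : (C.filter (fun v => ttil v ≠ ttil u)) = (C.filter (fun v => ¬ ttil v = ttil u)) := rfl
    rw [this]
    linarith
  have hSlow : (C.card : ℝ) * ((C.card : ℝ) - st/2) ≤ (S.card : ℝ) := by
    have : (S.card : ℝ) = ∑ u ∈ C, ((C.filter (fun v => ttil v ≠ ttil u)).card : ℝ) := by
      rw [hfib]
      push_cast
      exact Finset.sum_congr rfl (fun u hu => by rw [hfibcard u hu])
    rw [this]
    calc (C.card : ℝ) * ((C.card : ℝ) - st/2)
        = ∑ _u ∈ C, ((C.card : ℝ) - st/2) := by rw [Finset.sum_const, nsmul_eq_mul]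
      _ ≤ ∑ u ∈ C, ((C.filter (fun v => ttil v ≠ ttil u)).card : ℝ) :=
          Finset.sum_le_sum key
  -- Step B: S = D ∪ D', disjoint, equal cards
  have hunion : S = D ∪ D' := by
    ext e
    simp only [hSdef, hDdef, hD'def, Finset.mem_union, Finset.mem_filter, Finset.mem_univ,
      true_and]
    constructor
    · rintro ⟨h1, h2, h3⟩
      have hne : e.1 ≠ e.2 := fun h => h3 (by rw [h])
      rcases lt_or_gt_of_ne hne with h | h
      · exact Or.inl ⟨h, h1, h2, h3⟩
      · exact Or.inr ⟨h, h1, h2, h3⟩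
    · rintro (⟨_, h⟩ | ⟨_, h⟩) <;> exact h
  have hdisj : Disjoint D D' := by
    rw [Finset.disjoint_left]
    intro e he he'
    simp only [hDdef, hD'def, Finset.mem_filter] at he he'
    exact absurd he'.2.1 (not_lt.mpr (le_of_lt he.2.1))
  have hcardeq : D'.card = D.card := by
    apply Finset.card_bij (fun e _ => e.swap)
    · intro e he
      simp only [hD'def, Finset.mem_filter, Finset.mem_univ, true_and] at he
      simp only [hDdef, Finset.mem_filter, Finset.mem_univ, true_and, Prod.fst_swap,
        Prod.snd_swap]
      exact ⟨he.1, he.2.2.1, he.2.1, fun h => he.2.2.2 h.symm⟩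
    · intro e1 _ e2 _ h
      exact Prod.swap_injective h
    · intro e he
      simp only [hDdef, Finset.mem_filter, Finset.mem_univ, true_and] at he
      refine ⟨e.swap, ?_, Prod.swap_swap e⟩
      simp only [hD'def, Finset.mem_filter, Finset.mem_univ, true_and, Prod.fst_swap,
        Prod.snd_swap]
      exact ⟨he.1, he.2.2.1, he.2.1, fun h => he.2.2.2 h.symm⟩
  have hS2D : S.card = 2 * D.card := by
    rw [hunion, Finset.card_union_of_disjoint hdisj, hcardeq]
    ring
  -- Step C: D ⊆ disag set
  have hDle : D.card ≤ disag n ttil tstar := by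
    apply Finset.card_le_card
    intro e he
    simp only [hDdef, Finset.mem_filter, Finset.mem_univ, true_and] at he
    obtain ⟨h1, h2, h3, h4⟩ := he
    simp only [disag, Finset.mem_filter, Finset.mem_univ, true_and]
    refine ⟨h1, fun h => h4 (h.mpr (h2.trans h3.symm))⟩
  -- final arithmetic
  have hm : st < (C.card : ℝ) := hbig
  have hDleR : (D.card : ℝ) ≤ (disag n ttil tstar : ℝ) := by exact_mod_cast hDle
  have hS2DR : (S.card : ℝ) = 2 * (D.card : ℝ) := by exact_mod_cast hS2D
  nlinarith [hSlow, hm, hst2, hDleR]
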